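/- arXiv:2108.03369 — 3 statements merged into one kernel-verified Lean document; each statement's English description precedes it below -/
import Mathlib

section
/- Let P be a consistent extended logic program (an LPOD in which every rule head is a single literal, all of whose standard Gelfond–Lifschitz answer sets are consistent). Then the three-valued answer sets of P coincide with the standard answer sets of P: an interpretation M is a three-valued answer set of P if and only if M takes values only in {F,T} and the set {L : M(L)=T} is a standard answer set of P. -/
/-! Four truth values F < F* < T* < T. -/
inductive V4 : Type
  | F | Fs | Ts | T
  deriving DecidableEq, Repr

instance : Fintype V4 where
  elems := {V4.F, V4.Fs, V4.Ts, V4.T}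
  complete x := by cases x <;> simp

namespace V4

def toNat : V4 → ℕ
  | F => 0
  | Fs => 1
  | Ts => 2
  | T => 3

theorem toNat_injective : Function.Injective toNat := by
  intro a b h
  cases a <;> cases b <;> simp_all [toNat]

instance : LinearOrder V4 := LinearOrder.lift' toNat toNat_injective

instance : BoundedOrder V4 where
  top := T
  le_top a := by cases a <;> decide
  bot := F
  bot_le a := by cases a <;> decide

/-- Negation-as-failure: `not φ` is `T` if `φ ≤ F*`, else `F`. -/
def notv (a : V4) : V4 := if a ≤ Fs then T else F

/-- Ordered disjunction on truth values: `u × v = v` if `u = F*`, else `u`. -/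
def times (a b : V4) : V4 := if a = Fs then b else a

end V4

variable {α : Type}

/-- A ground literal: an atom together with a polarity (`true` = the atom itself,
`false` = its strong negation). -/
structure Lit (α : Type) where
  atom : α
  positive : Bool
  deriving DecidableEq

/-- A (four-valued) interpretation assigns a truth value to every literal.
Three-valued interpretations are the `solid` ones (no `T*` value). -/
abbrev Interp (α : Type) := Lit α → V4

/-- `I` is solid (equivalently, three-valued) if it assigns `T*` to no literal. -/
def solid (I : Interp α) : Prop := ∀ l, I l ≠ V4.Ts

/-- `I` is consistent: no atom has both the atom and its strong negation `T`. -/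
def consistentI (I : Interp α) : Prop :=
  ∀ a : α, ¬ (I ⟨a, true⟩ = V4.T ∧ I ⟨a, false⟩ = V4.T)

/-- `I` takes values only in `{F, T}`. -/
def twoValued (I : Interp α) : Prop := ∀ l, I l = V4.F ∨ I l = V4.T

/-- Value of the conjunction of a list of literals. -/
def evalConj (I : Interp α) (L : List (Lit α)) : V4 := (L.map I).foldr min V4.T

/-- Value of the conjunction `not B1 ∧ ⋯ ∧ not Bk`. -/
def evalNegs (I : Interp α) (L : List (Lit α)) : V4 :=
  (L.map (fun b => V4.notv (I b))).foldr min V4.T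

/-- Value of the disjunction of a list of literals. -/
def evalDisj (I : Interp α) (L : List (Lit α)) : V4 := (L.map I).foldr max V4.F

/-- Value of an ordered disjunction of the given (nonempty) list of values.
(`F*` is a right identity for `×`, so the fold computes `v1 × ⋯ × vn`.) -/
def evalOD (vs : List V4) : V4 := vs.foldr V4.times V4.Fs

/-- Pointwise `≤` on interpretations. -/
def interpLE (I J : Interp α) : Prop := ∀ l, I l ≤ J l

/-- The four-valued relation `⪯`: `u ⪯ v` iff `u = v` or `u ≺ v`, where
`F ≺ F*`, `F ≺ T*`, `F ≺ T` and `T* ≺ T`.  On three-valued (solid)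
interpretations it restricts to the ordering generated by `F ≺ F*`, `F ≺ T`. -/
def preceq (u v : V4) : Prop :=
  u = v ∨ (u = V4.F ∧ v ≠ V4.F) ∨ (u = V4.Ts ∧ v = V4.T)

/-- Pointwise `⪯` on interpretations. -/
def interpPreceq (I J : Interp α) : Prop := ∀ l, preceq (I l) (J l)

/-- The set of literals that are `T` in `I`. -/
def collapse (I : Interp α) : Set (Lit α) := { l | I l = V4.T }

/-! ### LPOD rules -/

/-- An LPOD rule `C1 × ⋯ × Cn ← A1,…,Am, not B1,…,not Bk` with head
`c1 :: cs` (so the head is nonempty). -/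
structure Rule (α : Type) where
  c1 : Lit α
  cs : List (Lit α)
  pos : List (Lit α)
  neg : List (Lit α)

def Rule.headList (R : Rule α) : List (Lit α) := R.c1 :: R.cs

def Rule.headVal (R : Rule α) (I : Interp α) : V4 := evalOD (R.headList.map I)

def Rule.bodyVal (R : Rule α) (I : Interp α) : V4 :=
  min (evalConj I R.pos) (evalNegs I R.neg)

/-- `I` satisfies the rule `R` (the rule evaluates to `T`). -/
def ruleSat (I : Interp α) (R : Rule α) : Prop := R.bodyVal I ≤ R.headVal I

/-- `I` is a model of the LPOD `P`. -/
def isModel (I : Interp α) (P : Set (Rule α)) : Prop := ∀ R ∈ P, ruleSat I R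

/-! ### The ×-reduct of an LPOD -/

/-- A reduct rule `C ← [F*,] A1,…,Am`; `fstar` records whether the constant `F*`
occurs in the body. -/
structure RedRule (α : Type) where
  head : Lit α
  pos : List (Lit α)
  fstar : Bool

def RedRule.bodyVal (r : RedRule α) (I : Interp α) : V4 :=
  min (if r.fstar then V4.Fs else V4.T) (evalConj I r.pos)

def redSat (I : Interp α) (r : RedRule α) : Prop := r.bodyVal I ≤ I r.head

def redModel (I : Interp α) (Q : Set (RedRule α)) : Prop := ∀ r ∈ Q, redSat I r

/-- Reduct rules generated by a head `C1,…,Cn`: rules `Cj ← F*, body` for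
`j < r` and `Cr ← body`, where `r` is the least index with
`I C1 = ⋯ = I C_{r-1} = F*` and (`r = n` or `I Cr ≠ F*`). -/
def xredHead (I : Interp α) (body : List (Lit α)) : List (Lit α) → List (RedRule α)
  | [] => []
  | [c] => [⟨c, body, false⟩]
  | c :: c' :: rest =>
    if I c = V4.Fs then ⟨c, body, true⟩ :: xredHead I body (c' :: rest)
    else [⟨c, body, false⟩]

/-- The ×-reduct of a rule w.r.t. `I`. -/
def xredRule (I : Interp α) (R : Rule α) : List (RedRule α) :=
  if ∃ b ∈ R.neg, I b = V4.T then [] else xredHead I R.pos R.headList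

/-- The ×-reduct of an LPOD w.r.t. `I`. -/
def xreduct (I : Interp α) (P : Set (Rule α)) : Set (RedRule α) :=
  { r | ∃ R ∈ P, r ∈ xredRule I R }

/-- `M` is a three-valued answer set of the LPOD `P`: a consistent three-valued
interpretation that is the `≤`-least (three-valued) model of `P^M_×`. -/
def threeAnswerSet (P : Set (Rule α)) (M : Interp α) : Prop :=
  solid M ∧ consistentI M ∧ redModel M (xreduct M P) ∧
  ∀ N : Interp α, solid N → redModel N (xreduct M P) → interpLE M N

/-! ### Two-valued notions: Brewka answer sets and GL answer sets -/

/-- A set of literals is consistent if it contains no complementary pair. -/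
def twoConsistent (N : Set (Lit α)) : Prop :=
  ∀ a : α, ¬ (Lit.mk a true ∈ N ∧ Lit.mk a false ∈ N)

/-- `N` is a (two-valued) Brewka-model of the LPOD `P`. -/
def brewkaModel (N : Set (Lit α)) (P : Set (Rule α)) : Prop :=
  ∀ R ∈ P, (∀ a ∈ R.pos, a ∈ N) → (∀ b ∈ R.neg, b ∉ N) → ∃ c ∈ R.headList, c ∈ N

/-- A positive rule `C ← A1,…,Am`. -/
structure PosRule (α : Type) where
  head : Lit α
  pos : List (Lit α)

/-- `N` is a two-valued model of a positive program. -/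
def posModel (N : Set (Lit α)) (Q : Set (PosRule α)) : Prop :=
  ∀ r ∈ Q, (∀ a ∈ r.pos, a ∈ N) → r.head ∈ N

/-- The Brewka ×-reduct of an LPOD w.r.t. a set of literals `N`:
`Ci ← A1,…,Am` whenever `Ci ∈ N` and `N ∩ {C1,…,C_{i-1},B1,…,Bk} = ∅`. -/
def brewkaReduct (N : Set (Lit α)) (P : Set (Rule α)) : Set (PosRule α) :=
  { r | ∃ R ∈ P, ∃ l1 l2 : List (Lit α),
      R.headList = l1 ++ r.head :: l2 ∧ r.pos = R.pos ∧ r.head ∈ N ∧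
      (∀ c ∈ l1, c ∉ N) ∧ (∀ b ∈ R.neg, b ∉ N) }

/-- `N` is a Brewka answer set of the LPOD `P`. -/
def brewkaAnswerSet (P : Set (Rule α)) (N : Set (Lit α)) : Prop :=
  twoConsistent N ∧ brewkaModel N P ∧ posModel N (brewkaReduct N P) ∧
  ∀ N', posModel N' (brewkaReduct N P) → N ⊆ N'

/-- The Gelfond–Lifschitz reduct of an extended logic program (an LPOD all
of whose rule heads are single literals) w.r.t. a set of literals `N`. -/
def glReduct (P : Set (Rule α)) (N : Set (Lit α)) : Set (PosRule α) :=
  { r | ∃ R ∈ P, (∀ b ∈ R.neg, b ∉ N) ∧ r.head = R.c1 ∧ r.pos = R.pos }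

/-- `N` is a standard answer set of the extended logic program `P`: a consistent
set of literals that is the least model of `P^N`. -/
def stdAnswerSet (P : Set (Rule α)) (N : Set (Lit α)) : Prop :=
  twoConsistent N ∧ posModel N (glReduct P N) ∧
  ∀ N', posModel N' (glReduct P N) → N ⊆ N'

/-! ### DLPODs -/

/-- A DLPOD rule `𝒞1 × ⋯ × 𝒞n ← A1,…,Am, not B1,…,not Bk`, where each `𝒞i`
is a disjunction of literals; the head is `c1 :: cs` (nonempty). -/
structure DRule (α : Type) where
  c1 : List (Lit α)
  cs : List (List (Lit α))
  pos : List (Lit α)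
  neg : List (Lit α)

def DRule.headList (R : DRule α) : List (List (Lit α)) := R.c1 :: R.cs

def DRule.headVal (R : DRule α) (I : Interp α) : V4 :=
  evalOD (R.headList.map (evalDisj I))

def DRule.bodyVal (R : DRule α) (I : Interp α) : V4 :=
  min (evalConj I R.pos) (evalNegs I R.neg)

def dRuleSat (I : Interp α) (R : DRule α) : Prop := R.bodyVal I ≤ R.headVal I

def isDModel (I : Interp α) (P : Set (DRule α)) : Prop := ∀ R ∈ P, dRuleSat I R

/-- A disjunctive reduct rule `𝒞 ← [F*,] A1,…,Am`. -/
structure DRedRule (α : Type) where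
  head : List (Lit α)
  pos : List (Lit α)
  fstar : Bool

def DRedRule.bodyVal (r : DRedRule α) (I : Interp α) : V4 :=
  min (if r.fstar then V4.Fs else V4.T) (evalConj I r.pos)

def dredSat (I : Interp α) (r : DRedRule α) : Prop := r.bodyVal I ≤ evalDisj I r.head

def dredModel (I : Interp α) (Q : Set (DRedRule α)) : Prop := ∀ r ∈ Q, dredSat I r

def dxredHead (I : Interp α) (body : List (Lit α)) :
    List (List (Lit α)) → List (DRedRule α)
  | [] => []
  | [c] => [⟨c, body, false⟩]
  | c :: c' :: rest =>
    if evalDisj I c = V4.Fs then ⟨c, body, true⟩ :: dxredHead I body (c' :: rest)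
    else [⟨c, body, false⟩]

/-- The ×-reduct of a DLPOD rule w.r.t. `I`. -/
def dxredRule (I : Interp α) (R : DRule α) : List (DRedRule α) :=
  if ∃ b ∈ R.neg, I b = V4.T then [] else dxredHead I R.pos R.headList

/-- The ×-reduct of a DLPOD w.r.t. `I`. -/
def dxreduct (I : Interp α) (P : Set (DRule α)) : Set (DRedRule α) :=
  { r | ∃ R ∈ P, r ∈ dxredRule I R }

/-- `M` is an answer set of the DLPOD `P`: a consistent three-valued
interpretation that is a `≤`-minimal (three-valued) model of `P^M_×`. -/
def dAnswerSet (P : Set (DRule α)) (M : Interp α) : Prop :=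
  solid M ∧ consistentI M ∧ dredModel M (dxreduct M P) ∧
  ∀ N : Interp α, solid N → dredModel N (dxreduct M P) → interpLE N M → N = M

/-- A positive disjunctive rule `C1 ∨ ⋯ ∨ Cq ← A1,…,Am`. -/
structure DPosRule (α : Type) where
  head : List (Lit α)
  pos : List (Lit α)

/-- `N` is a two-valued model of a positive disjunctive program. -/
def dposModel (N : Set (Lit α)) (Q : Set (DPosRule α)) : Prop :=
  ∀ r ∈ Q, (∀ a ∈ r.pos, a ∈ N) → ∃ c ∈ r.head, c ∈ N

/-- The Gelfond–Lifschitz reduct of a disjunctive extended logic program (a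
DLPOD all of whose rule heads are single disjunctions). -/
def glDReduct (P : Set (DRule α)) (N : Set (Lit α)) : Set (DPosRule α) :=
  { r | ∃ R ∈ P, (∀ b ∈ R.neg, b ∉ N) ∧ r.head = R.c1 ∧ r.pos = R.pos }

/-- `N` is a standard disjunctive answer set: a consistent set of literals that
is a minimal two-valued model of `P^N`. -/
def stdDAnswerSet (P : Set (DRule α)) (N : Set (Lit α)) : Prop :=
  twoConsistent N ∧ dposModel N (glDReduct P N) ∧
  ∀ N', dposModel N' (glDReduct P N) → N' ⊆ N → N' = N

section Aux

variable {α : Type}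

theorem V4.le_T (x : V4) : x ≤ V4.T := le_top

theorem V4.F_le' (x : V4) : V4.F ≤ x := bot_le

theorem V4.T_le {x : V4} (h : V4.T ≤ x) : x = V4.T := le_antisymm le_top h

theorem le_evalConj {I : Interp α} {L : List (Lit α)} {x : V4} :
    x ≤ evalConj I L ↔ ∀ a ∈ L, x ≤ I a := by
  induction L with
  | nil => simpa [evalConj] using V4.le_T x
  | cons a L ih =>
      show x ≤ min (I a) (evalConj I L) ↔ _
      simp [le_min_iff, ih]

theorem evalConj_eq_top {I : Interp α} {L : List (Lit α)} :
    evalConj I L = V4.T ↔ ∀ a ∈ L, I a = V4.T := by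
  constructor
  · intro h a ha
    exact V4.T_le (le_evalConj.mp (le_of_eq h.symm) a ha)
  · intro h
    exact V4.T_le (le_evalConj.mpr fun a ha => le_of_eq (h a ha).symm)

theorem evalConj_le {I : Interp α} {L : List (Lit α)} {a : Lit α} (h : a ∈ L) :
    evalConj I L ≤ I a := by
  induction L with
  | nil => cases h
  | cons b L ih =>
      rcases List.mem_cons.mp h with rfl | h'
      · exact min_le_left _ _
      · exact le_trans (min_le_right _ _) (ih h')

theorem conjSat {I : Interp α} {pos : List (Lit α)} {h : Lit α}
    (h2 : ∀ a ∈ pos, I a = V4.F ∨ I a = V4.T)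
    (himp : (∀ a ∈ pos, I a = V4.T) → I h = V4.T) :
    evalConj I pos ≤ I h := by
  by_cases hall : ∀ a ∈ pos, I a = V4.T
  · rw [himp hall]; exact V4.le_T _
  · push_neg at hall
    obtain ⟨a, ha, hne⟩ := hall
    have hF : I a = V4.F := (h2 a ha).resolve_right hne
    calc evalConj I pos ≤ I a := evalConj_le ha
      _ = V4.F := hF
      _ ≤ I h := V4.F_le' _

theorem bodyVal_false (c : Lit α) (pos : List (Lit α)) (I : Interp α) :
    RedRule.bodyVal (⟨c, pos, false⟩ : RedRule α) I = evalConj I pos := by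
  show min V4.T _ = _
  exact min_eq_right (V4.le_T _)

theorem xredRule_elp (I : Interp α) (R : Rule α) (h : R.cs = []) :
    xredRule I R = if ∃ b ∈ R.neg, I b = V4.T then []
      else [⟨R.c1, R.pos, false⟩] := by
  unfold xredRule Rule.headList
  rw [h]
  rfl

end Aux

/-- For a consistent extended logic program `P` (every rule head
a single literal, every least-model-of-its-own-GL-reduct set of literals
consistent), the three-valued answer sets of `P` are exactly the two-valued
interpretations whose set of true literals is a standard answer set of `P`. -/
theorem lpod_threeAnswerSet_iff_stdAnswerSet {α : Type} (P : Set (Rule α))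
    (hELP : ∀ R ∈ P, R.cs = [])
    (hCons : ∀ N : Set (Lit α),
      (posModel N (glReduct P N) ∧ ∀ N', posModel N' (glReduct P N) → N ⊆ N') →
      twoConsistent N) :
    ∀ M : Interp α,
      threeAnswerSet P M ↔ (twoValued M ∧ stdAnswerSet P (collapse M)) := by
  classical
  intro M
  have hmem : ∀ r : RedRule α, r ∈ xreduct M P ↔
      ∃ R ∈ P, (∀ b ∈ R.neg, M b ≠ V4.T) ∧ r = ⟨R.c1, R.pos, false⟩ := by
    intro r
    constructor
    · rintro ⟨R, hR, hr⟩
      rw [xredRule_elp M R (hELP R hR)] at hr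
      split at hr
      · simp at hr
      · next hneg =>
          push_neg at hneg
          simp only [List.mem_singleton] at hr
          exact ⟨R, hR, hneg, hr⟩
    · rintro ⟨R, hR, hneg, rfl⟩
      refine ⟨R, hR, ?_⟩
      rw [xredRule_elp M R (hELP R hR), if_neg (by push_neg; exact hneg)]
      simp
  constructor
  · rintro ⟨hsolid, hcons, hmod, hleast⟩
    -- closure of collapse M under the reduct rules
    have hclosedM : ∀ R ∈ P, (∀ b ∈ R.neg, M b ≠ V4.T) →
        (∀ a ∈ R.pos, M a = V4.T) → M R.c1 = V4.T := by
      intro R hR hneg hall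
      have hx : (⟨R.c1, R.pos, false⟩ : RedRule α) ∈ xreduct M P :=
        (hmem _).mpr ⟨R, hR, hneg, rfl⟩
      have hsat := hmod _ hx
      rw [redSat, bodyVal_false] at hsat
      have hT : evalConj M R.pos = V4.T := evalConj_eq_top.mpr hall
      exact V4.T_le (hT ▸ hsat)
    -- indicator interpretations
    have indsolid : ∀ S : Set (Lit α),
        solid (fun l => if l ∈ S then V4.T else V4.F) := by
      intro S l; by_cases h : l ∈ S <;> simp [h]
    have indModel : ∀ S : Set (Lit α),
        (∀ R ∈ P, (∀ b ∈ R.neg, M b ≠ V4.T) → (∀ a ∈ R.pos, a ∈ S) → R.c1 ∈ S) →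
        redModel (fun l => if l ∈ S then V4.T else V4.F) (xreduct M P) := by
      intro S hclosed r hr
      obtain ⟨R, hR, hneg, rfl⟩ := (hmem r).mp hr
      show RedRule.bodyVal _ _ ≤ _
      rw [bodyVal_false]
      apply conjSat
      · intro a _; by_cases h : a ∈ S <;> simp [h]
      · intro hall
        have hc : R.c1 ∈ S := hclosed R hR hneg (fun a ha => by
          have := hall a ha
          by_contra hns; simp [hns] at this)
        simp [hc]
    -- two-valuedness
    have h2v : twoValued M := by
      have hKmod := indModel (collapse M) (fun R hR hneg hall =>
        hclosedM R hR hneg hall)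
      have hle := hleast _ (indsolid (collapse M)) hKmod
      intro l
      by_cases h : M l = V4.T
      · exact Or.inr h
      · have : l ∉ collapse M := h
        have h2 := hle l
        simp only [this, if_false] at h2
        exact Or.inl (le_antisymm h2 (V4.F_le' _))
    refine ⟨h2v, hcons, ?_, ?_⟩
    · rintro r ⟨R, hR, hneg, hh, hp⟩ hall
      have hneg' : ∀ b ∈ R.neg, M b ≠ V4.T := fun b hb => hneg b hb
      have : M R.c1 = V4.T := hclosedM R hR hneg' (fun a ha => hall a (hp ▸ ha))
      show M r.head = V4.T
      rw [hh]; exact this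
    · intro N' hN'
      have hKmod := indModel N' (fun R hR hneg hall =>
        hN' ⟨R.c1, R.pos⟩ ⟨R, hR, hneg, rfl, rfl⟩ hall)
      have hle := hleast _ (indsolid N') hKmod
      intro l hl
      have h2 := hle l
      by_contra hns
      simp only [hns, if_false] at h2
      have : M l = V4.F := le_antisymm h2 (V4.F_le' _)
      rw [show M l = V4.T from hl] at this
      exact V4.noConfusion this
  · rintro ⟨h2v, h2c, hpm, hleast2⟩
    have hsolid : solid M := by
      intro l; rcases h2v l with h | h <;> simp [h]
    refine ⟨hsolid, h2c, ?_, ?_⟩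
    · intro r hr
      obtain ⟨R, hR, hneg, rfl⟩ := (hmem r).mp hr
      show RedRule.bodyVal _ _ ≤ _
      rw [bodyVal_false]
      apply conjSat
      · intro a _; rcases h2v a with h | h <;> simp [h]
      · intro hall
        exact hpm ⟨R.c1, R.pos⟩ ⟨R, hR, hneg, rfl, rfl⟩ hall
    · intro N hNsolid hNmod l
      rcases h2v l with h | h
      · rw [h]; exact V4.F_le' _
      · rw [h]
        have hS : posModel {l' | N l' = V4.T} (glReduct P (collapse M)) := by
          rintro r ⟨R, hR, hneg, hh, hp⟩ hall
          have hx : (⟨R.c1, R.pos, false⟩ : RedRule α) ∈ xreduct M P :=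
            (hmem _).mpr ⟨R, hR, fun b hb => hneg b hb, rfl⟩
          have hsat := hNmod _ hx
          rw [redSat, bodyVal_false] at hsat
          have hT : evalConj N R.pos = V4.T :=
            evalConj_eq_top.mpr (fun a ha => hall a (hp ▸ ha))
          have : N R.c1 = V4.T := V4.T_le (hT ▸ hsat)
          show N r.head = V4.T
          rw [hh]; exact this
        have hmemS := hleast2 _ hS h
        exact le_of_eq (show N l = V4.T from hmemS).symm
end

section
/- Let M be a three-valued model of an LPOD P. Then M is a model of the ×-reduct P^M_×. -/
variable {α : Type}

lemma evalNegs_eq_T {M : Interp α} (hM : solid M) (L : List (Lit α))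
    (h : ¬ ∃ b ∈ L, M b = V4.T) : evalNegs M L = V4.T := by
  induction L with
  | nil => rfl
  | cons b L ih =>
    have hb : M b ≠ V4.T := fun hb => h ⟨b, List.mem_cons_self, hb⟩
    have hbs : M b ≠ V4.Ts := hM b
    have hnot : V4.notv (M b) = V4.T := by
      unfold V4.notv
      have : M b ≤ V4.Fs := by cases hMb : M b <;> simp_all <;> decide
      simp [this]
    have := ih (fun ⟨c, hc, hcT⟩ => h ⟨c, List.mem_cons_of_mem b hc, hcT⟩)
    simp only [evalNegs, List.map_cons, List.foldr_cons] at *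
    rw [hnot, this]; decide

lemma xredHead_sat {M : Interp α} (body : List (Lit α)) (hb : V4) :
    ∀ hs : List (Lit α), ∀ r ∈ xredHead M body hs,
      hb ≤ evalOD (hs.map M) →
      min (if r.fstar then V4.Fs else V4.T) hb ≤ M r.head := by
  intro hs
  induction hs with
  | nil => intro r hr; simp [xredHead] at hr
  | cons c cs ih =>
    intro r hr hle
    cases cs with
    | nil =>
      simp [xredHead] at hr
      subst hr
      simp only [List.map_cons, List.map_nil, evalOD, List.foldr_cons,
        List.foldr_nil] at hle
      have : V4.times (M c) V4.Fs = M c := by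
        unfold V4.times; split <;> simp_all
      rw [this] at hle
      exact le_trans (min_le_right _ _) hle
    | cons c' rest =>
      by_cases hFs : M c = V4.Fs
      · simp only [xredHead, if_pos hFs, List.mem_cons] at hr
        rcases hr with hr | hr
        · subst hr
          simp only [if_pos rfl]
          calc min V4.Fs hb ≤ V4.Fs := min_le_left _ _
            _ = M c := hFs.symm
        · apply ih r hr
          have : evalOD ((c :: c' :: rest).map M) = evalOD ((c' :: rest).map M) := by
            simp only [List.map_cons, evalOD, List.foldr_cons]
            unfold V4.times; rw [if_pos hFs]
          rw [this] at hle
          exact hle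
      · simp only [xredHead, if_neg hFs, List.mem_singleton] at hr
        subst hr
        have : evalOD ((c :: c' :: rest).map M) = M c := by
          simp only [List.map_cons, evalOD, List.foldr_cons]
          unfold V4.times; rw [if_neg hFs]
        rw [this] at hle
        exact le_trans (min_le_right _ _) hle

/-- Every three-valued model of an LPOD `P` is a model of the
×-reduct `P^M_×`. -/
theorem isModel_redModel_xreduct {α : Type} (P : Set (Rule α)) (M : Interp α)
    (hM : solid M) (h : isModel M P) : redModel M (xreduct M P) := by
  rintro r ⟨R, hRP, hr⟩
  unfold xredRule at hr
  by_cases hneg : ∃ b ∈ R.neg, M b = V4.T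
  · simp [hneg] at hr
  · rw [if_neg hneg] at hr
    have hsat := h R hRP
    have hnegT := evalNegs_eq_T hM R.neg hneg
    have hbody : R.bodyVal M = evalConj M R.pos := by
      unfold Rule.bodyVal; rw [hnegT]; exact min_eq_left le_top
    have hle : evalConj M R.pos ≤ evalOD (R.headList.map M) := by
      rw [← hbody]; exact hsat
    have hpos : r.pos = R.pos := by
      clear hle hsat
      revert hr
      generalize R.headList = hs
      induction hs with
      | nil => intro hr; simp [xredHead] at hr
      | cons c cs ih =>
        intro hr
        cases cs with
        | nil => simp [xredHead] at hr; subst hr; rfl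
        | cons c' rest =>
          by_cases hFs : M c = V4.Fs
          · simp only [xredHead, if_pos hFs, List.mem_cons] at hr
            rcases hr with hr | hr
            · subst hr; rfl
            · exact ih hr
          · simp only [xredHead, if_neg hFs, List.mem_singleton] at hr
            subst hr; rfl
    have := xredHead_sat R.pos (evalConj M R.pos) R.headList r hr hle
    unfold redSat RedRule.bodyVal
    rw [hpos]
    exact this
end

section
/- Every three-valued answer set M of an LPOD P is a ⪯-minimal three-valued model of P, where ⪯ is the pointwise extension of the three-valued ordering with F ≺ T and F ≺ F*. -/
variable {α : Type}

/-! ### Auxiliary lemmas -/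

namespace V4

lemma F_le'_s3 (a : V4) : F ≤ a := by cases a <;> decide

lemma le_T' (a : V4) : a ≤ T := by cases a <;> decide

lemma le_F' {a : V4} (h : a ≤ F) : a = F := le_antisymm h (F_le'_s3 a)

lemma min_T' (a : V4) : min T a = a := min_eq_right (le_T' a)

lemma le_Fs_of_ne {a : V4} (h1 : a ≠ Ts) (h2 : a ≠ T) : a ≤ Fs := by
  cases a <;> first | decide | simp_all

end V4

lemma evalOD_cons (v : V4) (vs : List V4) :
    evalOD (v :: vs) = if v = V4.Fs then evalOD vs else v := rfl

lemma evalOD_singleton (v : V4) : evalOD [v] = v := by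
  rw [evalOD_cons]; split <;> simp_all [evalOD]

lemma evalConj_cons (I : Interp α) (a : Lit α) (L : List (Lit α)) :
    evalConj I (a :: L) = min (I a) (evalConj I L) := rfl

lemma evalConj_ne_F {N : Interp α} : ∀ {L : List (Lit α)},
    evalConj N L ≠ V4.F → ∀ a ∈ L, N a ≠ V4.F := by
  intro L
  induction L with
  | nil => simp
  | cons a L ih =>
    intro h b hb
    rw [evalConj_cons] at h
    rcases List.mem_cons.1 hb with hb | hb
    · subst hb
      intro hF
      exact h (by rw [hF]; exact V4.le_F' (min_le_left _ _))
    · refine ih (fun hF => h ?_) b hb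
      rw [hF]; exact V4.le_F' (min_le_right _ _)

lemma evalNegs_T {N : Interp α} : ∀ {L : List (Lit α)},
    (∀ b ∈ L, N b ≤ V4.Fs) → evalNegs N L = V4.T := by
  intro L
  induction L with
  | nil => intro _; rfl
  | cons b L ih =>
    intro h
    have h1 : V4.notv (N b) = V4.T := by
      rw [V4.notv, if_pos (h b (by simp))]
    show min (V4.notv (N b)) (evalNegs N L) = V4.T
    rw [h1, ih (fun c hc => h c (by simp [hc])), V4.min_T']

lemma evalNegs_F {I : Interp α} {b : Lit α} (hT : I b = V4.T) :
    ∀ {L : List (Lit α)}, b ∈ L → evalNegs I L = V4.F := by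
  intro L
  induction L with
  | nil => simp
  | cons c L ih =>
    intro hb
    show min (V4.notv (I c)) (evalNegs I L) = V4.F
    rcases List.mem_cons.1 hb with hb | hb
    · subst hb
      have : V4.notv (I b) = V4.F := by rw [V4.notv, hT, if_neg (by decide)]
      rw [this]
      exact V4.le_F' (min_le_left _ _)
    · rw [ih hb]
      exact V4.le_F' (min_le_right _ _)

lemma xredHead_pos (I : Interp α) (body : List (Lit α)) :
    ∀ hs r, r ∈ xredHead I body hs → r.pos = body
  | [], r, h => by simp [xredHead] at h
  | [c], r, h => by
      simp only [xredHead, List.mem_singleton] at h; rw [h]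
  | c :: c' :: rest, r, h => by
      rw [xredHead] at h
      split at h
      · rcases List.mem_cons.1 h with h | h
        · rw [h]
        · exact xredHead_pos I body (c' :: rest) r h
      · rw [List.mem_singleton] at h; rw [h]

lemma head_le_of_redSat (I : Interp α) (body : List (Lit α)) :
    ∀ hs, hs ≠ [] → (∀ r ∈ xredHead I body hs, redSat I r) →
      evalConj I body ≤ evalOD (hs.map I)
  | [], h, _ => absurd rfl h
  | [c], _, hsat => by
      have h := hsat ⟨c, body, false⟩ (by simp [xredHead])
      unfold redSat RedRule.bodyVal at h
      simp only [if_neg (by decide : ¬(false = true)), V4.min_T'] at h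
      rw [List.map_cons, List.map_nil, evalOD_singleton]
      exact h
  | c :: c' :: rest, _, hsat => by
      rw [List.map_cons, evalOD_cons]
      split
      case isTrue h =>
        refine head_le_of_redSat I body (c' :: rest) (by simp) ?_
        intro r hr
        refine hsat r ?_
        rw [xredHead, if_pos h]
        exact List.mem_cons_of_mem _ hr
      case isFalse h =>
        have h2 := hsat ⟨c, body, false⟩ (by rw [xredHead, if_neg h]; simp)
        unfold redSat RedRule.bodyVal at h2
        simpa only [if_neg (by decide : ¬(false = true)), V4.min_T'] using h2

lemma redSat_of_model (M N : Interp α) (body : List (Lit α))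
    (hβ : evalConj N body ≠ V4.F) :
    ∀ hs, (∀ c ∈ hs, N c = M c ∨ N c = V4.F) →
      evalConj N body ≤ evalOD (hs.map N) →
      ∀ r ∈ xredHead M body hs, redSat N r
  | [], _, _, r, hr => by simp [xredHead] at hr
  | [c], _, hle, r, hr => by
      simp only [xredHead, List.mem_singleton] at hr
      subst hr
      unfold redSat RedRule.bodyVal
      simp only [if_neg (by decide : ¬(false = true)), V4.min_T']
      rw [List.map_cons, List.map_nil, evalOD_singleton] at hle
      exact hle
  | c :: c' :: rest, hdich, hle, r, hr => by
      rw [List.map_cons, evalOD_cons] at hle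
      rw [xredHead] at hr
      split at hr
      case isTrue hMc =>
        have hNc : N c = V4.Fs := by
          rcases hdich c (by simp) with h | h
          · rw [h, hMc]
          · exfalso
            rw [if_neg (by rw [h]; decide)] at hle
            exact hβ (by rw [h] at hle; exact V4.le_F' hle)
        rcases List.mem_cons.1 hr with hr | hr
        · subst hr
          unfold redSat RedRule.bodyVal
          simp only [if_pos rfl]
          calc min V4.Fs (evalConj N body) ≤ V4.Fs := min_le_left _ _
            _ ≤ N c := by rw [hNc]
        · rw [if_pos hNc] at hle
          exact redSat_of_model M N body hβ (c' :: rest)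
            (fun d hd => hdich d (by simp [hd])) hle r hr
      case isFalse hMc =>
        rw [List.mem_singleton] at hr
        subst hr
        have hNc : N c ≠ V4.Fs := by
          rcases hdich c (by simp) with h | h
          · rw [h]; exact hMc
          · rw [h]; decide
        rw [if_neg hNc] at hle
        unfold redSat RedRule.bodyVal
        simpa only [if_neg (by decide : ¬(false = true)), V4.min_T'] using hle

/-- Every three-valued answer set of an LPOD `P` is a
`⪯`-minimal three-valued model of `P`. -/
theorem threeAnswerSet_preceq_minimal {α : Type} (P : Set (Rule α)) (M : Interp α)
    (h : threeAnswerSet P M) :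
    isModel M P ∧
      ∀ N : Interp α, solid N → isModel N P → interpPreceq N M → N = M := by
  obtain ⟨hsolid, hcons, hmod, hleast⟩ := h
  constructor
  · -- M is a model of P
    intro R hR
    by_cases hb : ∃ b ∈ R.neg, M b = V4.T
    · obtain ⟨b, hbmem, hbT⟩ := hb
      have hneg : evalNegs M R.neg = V4.F := evalNegs_F hbT hbmem
      unfold ruleSat Rule.bodyVal
      rw [hneg]
      calc min (evalConj M R.pos) V4.F ≤ V4.F := min_le_right _ _
        _ ≤ _ := V4.F_le'_s3 _
    · have hred : ∀ r ∈ xredHead M R.pos R.headList, redSat M r := by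
        intro r hr
        exact hmod r ⟨R, hR, by rw [xredRule, if_neg hb]; exact hr⟩
      have hle := head_le_of_redSat M R.pos R.headList
        (by simp [Rule.headList]) hred
      unfold ruleSat Rule.bodyVal Rule.headVal
      exact le_trans (min_le_left _ _) hle
  · -- ⪯-minimality
    intro N hNs hNmod hNpre
    have hdich : ∀ l, N l = M l ∨ N l = V4.F := by
      intro l
      rcases hNpre l with h | ⟨h1, _⟩ | ⟨h1, _⟩
      · exact Or.inl h
      · exact Or.inr h1
      · exact absurd h1 (hNs l)
    have hNred : redModel N (xreduct M P) := by
      intro r hr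
      obtain ⟨R, hR, hrR⟩ := hr
      rw [xredRule] at hrR
      split at hrR
      · simp at hrR
      case isFalse hb =>
        by_cases hβ : evalConj N R.pos = V4.F
        · have hp := xredHead_pos M R.pos R.headList r hrR
          unfold redSat RedRule.bodyVal
          rw [hp, hβ]
          calc min (if r.fstar then V4.Fs else V4.T) V4.F ≤ V4.F :=
              min_le_right _ _
            _ ≤ _ := V4.F_le'_s3 _
        · have hnegT : evalNegs N R.neg = V4.T := by
            refine evalNegs_T (fun b hbm => ?_)
            have hMb : M b ≤ V4.Fs :=
              V4.le_Fs_of_ne (hsolid b) (fun hT => hb ⟨b, hbm, hT⟩)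
            rcases hdich b with h | h
            · rw [h]; exact hMb
            · rw [h]; exact V4.F_le'_s3 _
          have hle : evalConj N R.pos ≤ evalOD (R.headList.map N) := by
            have hsat := hNmod R hR
            unfold ruleSat Rule.bodyVal Rule.headVal at hsat
            rwa [hnegT, min_eq_left (V4.le_T' _)] at hsat
          exact redSat_of_model M N R.pos hβ R.headList
            (fun c _ => hdich c) hle r hrR
    have hMN : interpLE M N := hleast N hNs hNred
    funext l
    rcases hdich l with h | h
    · exact h
    · have hMF : M l = V4.F := V4.le_F' (h ▸ hMN l)
      rw [h, hMF]
end
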